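/- For every n ≥ 1, the sets T^point_n and T'^point_n are (n,𝔾)-equivalent, where the witnessing trace equivalence is ≈_𝔾 (two traces are related iff they have the same set of occurring valuations). -/
import Mathlib


/-- The alphabet `{x, y}`. -/
inductive XY : Type where
  | x : XY
  | y : XY
deriving DecidableEq

/-- The valuation with `x ↦ b₁`, `y ↦ b₂`. -/
def vXY (b₁ b₂ : Bool) : XY → Bool
  | .x => b₁
  | .y => b₂

/-- The trace that carries the valuation `v` on positions `start ≤ i < start + len`
and the all-false valuation `00` elsewhere. -/
def blockTr (v : XY → Bool) (start len : ℕ) : ℕ → XY → Bool :=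
  fun i => if start ≤ i ∧ i < start + len then v else fun _ => false

/-- `E_n = {(11)^{n+2}(00)^ω} ∪ ⋃_{0≤j<n} {(00)^j 10 (00)^ω, (00)^j 01 (00)^ω}`. -/
def En (n : ℕ) : Set (ℕ → XY → Bool) :=
  {τ | τ = blockTr (vXY true true) 0 (n + 2) ∨
       ∃ j, j < n ∧ (τ = blockTr (vXY true false) j 1 ∨ τ = blockTr (vXY false true) j 1)}

/-- `T^point_n = E_n ∪ {(00)^n 10 10 (00)^ω, (00)^n 01 01 (00)^ω}`. -/
def Tpoint (n : ℕ) : Set (ℕ → XY → Bool) :=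
  En n ∪ {blockTr (vXY true false) n 2, blockTr (vXY false true) n 2}

/-- `T'^point_n = E_n ∪ {(00)^n 10 00 (00)^ω, (00)^n 01 00 (00)^ω}`. -/
def Tpoint' (n : ℕ) : Set (ℕ → XY → Bool) :=
  En n ∪ {blockTr (vXY true false) n 1, blockTr (vXY false true) n 1}

/-- Flattening of a trace assignment: an infinite trace over the alphabet `X × ℕ`
(`false` on pairs `(a, π)` with `π` outside the domain of the assignment). -/
def flat {X : Type} {T : Set (ℕ → X → Bool)} (Θ : ℕ → Option ↥T) : ℕ → (X × ℕ) → Bool :=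
  fun i p => ((Θ p.2).map (fun τ => τ.1 i p.1)).getD false

/-- The domain of the assignment consists of exactly `k` trace variables. -/
def HasDomCard {X : Type} {T : Set (ℕ → X → Bool)} (Θ : ℕ → Option ↥T) (k : ℕ) : Prop :=
  ∃ s : Finset ℕ, (∀ π, (Θ π).isSome ↔ π ∈ s) ∧ s.card = k

/-- Composition `f ∘ Θ` of a bijection `f : T → T'` with an assignment over `T`. -/
def mapAssign {X : Type} {T T' : Set (ℕ → X → Bool)} (f : ↥T ≃ ↥T') (Θ : ℕ → Option ↥T) :
    ℕ → Option ↥T' := fun π => (Θ π).map f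

/-! ### Auxiliary lemmas -/

open Classical

section Aux

lemma blockTr_pos {v : XY → Bool} {s l i : ℕ} (h1 : s ≤ i) (h2 : i < s + l) :
    blockTr v s l i = v := by
  show (if s ≤ i ∧ i < s + l then v else fun _ => false) = v
  rw [if_pos ⟨h1, h2⟩]

lemma blockTr_neg {v : XY → Bool} {s l i : ℕ} (h : ¬(s ≤ i ∧ i < s + l)) :
    blockTr v s l i = fun _ => false := by
  show (if s ≤ i ∧ i < s + l then v else fun _ => false) = (fun _ => false)
  rw [if_neg h]

lemma En_cases {n : ℕ} {τ : ℕ → XY → Bool} (h : τ ∈ En n) :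
    τ = blockTr (vXY true true) 0 (n + 2) ∨
      ∃ j, j < n ∧ (τ = blockTr (vXY true false) j 1 ∨ τ = blockTr (vXY false true) j 1) := h

lemma En_ne_block {n k : ℕ} {τ : ℕ → XY → Bool} (hk : 1 ≤ k) (h : τ ∈ En n)
    {v : XY → Bool} (hv : v = vXY true false ∨ v = vXY false true) :
    τ ≠ blockTr v n k := by
  intro he
  have hb : blockTr v n k n = v := blockTr_pos le_rfl (by omega)
  have hx : τ n = v := by rw [he, hb]
  rcases En_cases h with rfl | ⟨j, hj, rfl | rfl⟩
  · rw [blockTr_pos (Nat.zero_le n) (by omega)] at hx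
    rcases hv with rfl | rfl
    · exact absurd (congrFun hx XY.y) (by simp [vXY])
    · exact absurd (congrFun hx XY.x) (by simp [vXY])
  · rw [blockTr_neg (by omega)] at hx
    rcases hv with rfl | rfl
    · exact absurd (congrFun hx.symm XY.x) (by simp [vXY])
    · exact absurd (congrFun hx.symm XY.y) (by simp [vXY])
  · rw [blockTr_neg (by omega)] at hx
    rcases hv with rfl | rfl
    · exact absurd (congrFun hx.symm XY.x) (by simp [vXY])
    · exact absurd (congrFun hx.symm XY.y) (by simp [vXY])

lemma big_mem_En {n : ℕ} : blockTr (vXY true true) 0 (n + 2) ∈ En n := Or.inl rfl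

lemma block10_ne_block01 {n k k' : ℕ} (hk : 1 ≤ k) (hk' : 1 ≤ k') :
    blockTr (vXY true false) n k ≠ blockTr (vXY false true) n k' := by
  intro h
  have h' := congrFun h n
  rw [blockTr_pos le_rfl (by omega), blockTr_pos le_rfl (by omega)] at h'
  exact absurd (congrFun h' XY.x) (by simp [vXY])

lemma single_ne_big {n j : ℕ} (hj : j < n) (v : XY → Bool) :
    blockTr v j 1 ≠ blockTr (vXY true true) 0 (n + 2) := by
  intro h
  have h' := congrFun h n
  rw [blockTr_neg (by omega), blockTr_pos (by omega) (by omega)] at h'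
  exact absurd (congrFun h'.symm XY.x) (by simp [vXY])

lemma blockTr_single_inj {j j' : ℕ} {v v' : XY → Bool} (hv : v ≠ fun _ => false)
    (h : blockTr v j 1 = blockTr v' j' 1) : j = j' := by
  by_contra hne
  have h1 : blockTr v j 1 j = v := blockTr_pos le_rfl (by omega)
  have h2 : blockTr v' j' 1 j = fun _ => false := blockTr_neg (by omega)
  exact hv (by rw [← h1, h, h2])

lemma v10_ne_ff : vXY true false ≠ fun _ => false := by
  intro h; exact absurd (congrFun h XY.x) (by simp [vXY])

lemma v01_ne_ff : vXY false true ≠ fun _ => false := by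
  intro h; exact absurd (congrFun h XY.y) (by simp [vXY])

lemma Tpoint_cases {n : ℕ} {τ : ℕ → XY → Bool} (h : τ ∈ Tpoint n) :
    τ ∈ En n ∨ τ = blockTr (vXY true false) n 2 ∨ τ = blockTr (vXY false true) n 2 := by
  rcases h with h | h
  · exact Or.inl h
  · rcases h with h | h
    · exact Or.inr (Or.inl h)
    · exact Or.inr (Or.inr h)

lemma Tpoint'_cases {n : ℕ} {τ : ℕ → XY → Bool} (h : τ ∈ Tpoint' n) :
    τ ∈ En n ∨ τ = blockTr (vXY true false) n 1 ∨ τ = blockTr (vXY false true) n 1 := by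
  rcases h with h | h
  · exact Or.inl h
  · rcases h with h | h
    · exact Or.inr (Or.inl h)
    · exact Or.inr (Or.inr h)

noncomputable def fMap (n : ℕ) (τ : ↥(Tpoint n)) : ↥(Tpoint' n) :=
  if h1 : τ.1 = blockTr (vXY true false) n 2 then
    ⟨blockTr (vXY true false) n 1, Or.inr (Or.inl rfl)⟩
  else if h2 : τ.1 = blockTr (vXY false true) n 2 then
    ⟨blockTr (vXY false true) n 1, Or.inr (Or.inr rfl)⟩
  else
    ⟨τ.1, Or.inl ((Tpoint_cases τ.2).resolve_right (fun h => h.elim h1 h2))⟩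

noncomputable def gMap (n : ℕ) (τ : ↥(Tpoint' n)) : ↥(Tpoint n) :=
  if h1 : τ.1 = blockTr (vXY true false) n 1 then
    ⟨blockTr (vXY true false) n 2, Or.inr (Or.inl rfl)⟩
  else if h2 : τ.1 = blockTr (vXY false true) n 1 then
    ⟨blockTr (vXY false true) n 2, Or.inr (Or.inr rfl)⟩
  else
    ⟨τ.1, Or.inl ((Tpoint'_cases τ.2).resolve_right (fun h => h.elim h1 h2))⟩

lemma fMap_A2 {n : ℕ} (τ : ↥(Tpoint n)) (h : τ.1 = blockTr (vXY true false) n 2) :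
    (fMap n τ).1 = blockTr (vXY true false) n 1 := by
  unfold fMap; rw [dif_pos h]

lemma fMap_B2 {n : ℕ} (τ : ↥(Tpoint n)) (h : τ.1 = blockTr (vXY false true) n 2) :
    (fMap n τ).1 = blockTr (vXY false true) n 1 := by
  unfold fMap
  rw [dif_neg (by rw [h]; exact fun e => block10_ne_block01 one_le_two one_le_two e.symm),
    dif_pos h]

lemma fMap_eq_self {n : ℕ} (τ : ↥(Tpoint n)) (h : τ.1 ∈ En n) : (fMap n τ).1 = τ.1 := by
  unfold fMap
  rw [dif_neg (En_ne_block one_le_two h (Or.inl rfl)),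
    dif_neg (En_ne_block one_le_two h (Or.inr rfl))]

lemma gMap_A1 {n : ℕ} (σ : ↥(Tpoint' n)) (h : σ.1 = blockTr (vXY true false) n 1) :
    (gMap n σ).1 = blockTr (vXY true false) n 2 := by
  unfold gMap; rw [dif_pos h]

lemma gMap_B1 {n : ℕ} (σ : ↥(Tpoint' n)) (h : σ.1 = blockTr (vXY false true) n 1) :
    (gMap n σ).1 = blockTr (vXY false true) n 2 := by
  unfold gMap
  rw [dif_neg (by rw [h]; exact fun e => block10_ne_block01 le_rfl le_rfl e.symm),
    dif_pos h]

lemma gMap_eq_self {n : ℕ} (σ : ↥(Tpoint' n)) (h : σ.1 ∈ En n) : (gMap n σ).1 = σ.1 := by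
  unfold gMap
  rw [dif_neg (En_ne_block le_rfl h (Or.inl rfl)),
    dif_neg (En_ne_block le_rfl h (Or.inr rfl))]

noncomputable def fEquiv (n : ℕ) : ↥(Tpoint n) ≃ ↥(Tpoint' n) where
  toFun := fMap n
  invFun := gMap n
  left_inv := by
    intro τ
    apply Subtype.ext
    rcases Tpoint_cases τ.2 with hE | h | h
    · have h1 := fMap_eq_self τ hE
      rw [gMap_eq_self _ (by rw [h1]; exact hE), h1]
    · rw [gMap_A1 _ (fMap_A2 τ h), h]
    · rw [gMap_B1 _ (fMap_B2 τ h), h]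
  right_inv := by
    intro σ
    apply Subtype.ext
    rcases Tpoint'_cases σ.2 with hE | h | h
    · have h1 := gMap_eq_self σ hE
      rw [fMap_eq_self _ (by rw [h1]; exact hE), h1]
    · rw [fMap_A2 _ (gMap_A1 σ h), h]
    · rw [fMap_B2 _ (gMap_B1 σ h), h]

@[simp] lemma fEquiv_apply {n : ℕ} (τ : ↥(Tpoint n)) : fEquiv n τ = fMap n τ := rfl

@[simp] lemma fEquiv_symm_apply {n : ℕ} (τ : ↥(Tpoint' n)) : (fEquiv n).symm τ = gMap n τ := rfl

lemma block21 {v : XY → Bool} {n i : ℕ} (hi : i ≠ n + 1) :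
    blockTr v n 1 i = blockTr v n 2 i := by
  by_cases hc : n ≤ i ∧ i < n + 1
  · rw [blockTr_pos hc.1 hc.2, blockTr_pos hc.1 (by omega)]
  · rw [blockTr_neg hc, blockTr_neg (by omega)]

lemma fMap_off {n : ℕ} (τ : ↥(Tpoint n)) {i : ℕ} (hi : i ≠ n + 1) :
    (fMap n τ).1 i = τ.1 i := by
  unfold fMap
  split_ifs with h1 h2
  · rw [h1]; exact block21 hi
  · rw [h2]; exact block21 hi
  · rfl

lemma fMap_at_n {n : ℕ} (τ : ↥(Tpoint n)) : (fMap n τ).1 n = τ.1 (n + 1) := by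
  unfold fMap
  split_ifs with h1 h2
  · show blockTr (vXY true false) n 1 n = τ.1 (n + 1)
    rw [h1, blockTr_pos le_rfl (by omega), blockTr_pos (by omega) (by omega)]
  · show blockTr (vXY false true) n 1 n = τ.1 (n + 1)
    rw [h2, blockTr_pos le_rfl (by omega), blockTr_pos (by omega) (by omega)]
  · show τ.1 n = τ.1 (n + 1)
    have hE : τ.1 ∈ En n := (Tpoint_cases τ.2).resolve_right (fun h => h.elim h1 h2)
    rcases En_cases hE with h | ⟨j, hj, h | h⟩ <;> rw [h]
    · rw [blockTr_pos (by omega) (by omega), blockTr_pos (by omega) (by omega)]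
    · rw [blockTr_neg (by omega), blockTr_neg (by omega)]
    · rw [blockTr_neg (by omega), blockTr_neg (by omega)]

lemma fMap_at_n1_big {n : ℕ} (τ : ↥(Tpoint n)) (h : τ.1 = blockTr (vXY true true) 0 (n + 2)) :
    (fMap n τ).1 (n + 1) = vXY true true := by
  have hE : τ.1 ∈ En n := Or.inl h
  rw [fMap_eq_self τ hE, h, blockTr_pos (by omega) (by omega)]

lemma fMap_at_n1_nonbig {n : ℕ} (τ : ↥(Tpoint n))
    (h : τ.1 ≠ blockTr (vXY true true) 0 (n + 2)) :
    (fMap n τ).1 (n + 1) = fun _ => false := by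
  unfold fMap
  split_ifs with h1 h2
  · show blockTr (vXY true false) n 1 (n + 1) = _
    exact blockTr_neg (by omega)
  · show blockTr (vXY false true) n 1 (n + 1) = _
    exact blockTr_neg (by omega)
  · show τ.1 (n + 1) = _
    have hE : τ.1 ∈ En n := (Tpoint_cases τ.2).resolve_right (fun hh => hh.elim h1 h2)
    rcases En_cases hE with hh | ⟨j, hj, hh | hh⟩
    · exact absurd hh h
    · rw [hh]; exact blockTr_neg (by omega)
    · rw [hh]; exact blockTr_neg (by omega)

lemma Tpoint_at_n2 {n : ℕ} (τ : ↥(Tpoint n)) : τ.1 (n + 2) = fun _ => false := by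
  rcases Tpoint_cases τ.2 with hE | h | h
  · rcases En_cases hE with h | ⟨j, hj, h | h⟩ <;> rw [h] <;> exact blockTr_neg (by omega)
  · rw [h]; exact blockTr_neg (by omega)
  · rw [h]; exact blockTr_neg (by omega)

lemma free_eval {n : ℕ} (τ : ↥(Tpoint n)) {j : ℕ} (hj : j < n)
    (h1 : τ.1 ≠ blockTr (vXY true false) j 1) (h2 : τ.1 ≠ blockTr (vXY false true) j 1) :
    τ.1 j = (fMap n τ).1 (n + 1) := by
  rcases Tpoint_cases τ.2 with hE | h | h
  · rcases En_cases hE with h | ⟨j', hj', h | h⟩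
    · rw [fMap_at_n1_big τ h, h, blockTr_pos (by omega) (by omega)]
    · have hne : j' ≠ j := by rintro rfl; exact h1 h
      rw [fMap_at_n1_nonbig τ (by rw [h]; exact single_ne_big hj' _), h,
        blockTr_neg (by omega)]
    · have hne : j' ≠ j := by rintro rfl; exact h2 h
      rw [fMap_at_n1_nonbig τ (by rw [h]; exact single_ne_big hj' _), h,
        blockTr_neg (by omega)]
  · rw [fMap_at_n1_nonbig τ (by
        rw [h]; exact fun e => En_ne_block one_le_two big_mem_En (Or.inl rfl) e.symm),
      h, blockTr_neg (by omega)]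
  · rw [fMap_at_n1_nonbig τ (by
        rw [h]; exact fun e => En_ne_block one_le_two big_mem_En (Or.inr rfl) e.symm),
      h, blockTr_neg (by omega)]

lemma range_eq_aux {X : Type*} (f g : ℕ → X) (m : ℕ) (hoff : ∀ i, i ≠ m → f i = g i)
    (h1 : ∃ i, g i = f m) (h2 : ∃ i, f i = g m) : Set.range f = Set.range g := by
  apply Set.eq_of_subset_of_subset <;> rintro _ ⟨i, rfl⟩
  · by_cases hi : i = m
    · subst hi; exact h1
    · exact ⟨i, (hoff i hi).symm⟩
  · by_cases hi : i = m
    · subst hi; exact h2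
    · exact ⟨i, hoff i hi⟩

lemma counting {n : ℕ} {s : Finset ℕ} (hs : s.card = n) {π₀ π₁ : ℕ}
    (h0 : π₀ ∈ s) (h1 : π₁ ∈ s) (hne : π₀ ≠ π₁) (B : ℕ → ℕ → Prop)
    (hBs : ∀ π j, B π j → π ∈ s ∧ π ≠ π₀ ∧ π ≠ π₁)
    (hBu : ∀ π j j', B π j → B π j' → j = j')
    (hall : ∀ j, j < n → ∃ π, B π j) : False := by
  classical
  have hsub : ({π₀, π₁} : Finset ℕ) ⊆ s := by
    intro x hx
    rcases Finset.mem_insert.1 hx with rfl | hx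
    · exact h0
    · rw [Finset.mem_singleton.1 hx]; exact h1
  set F : ℕ → ℕ := fun j => if h : j < n then (hall j h).choose else 0 with hF
  have hBF : ∀ j, j < n → B (F j) j := by
    intro j hj
    simp only [hF, dif_pos hj]
    exact (hall j hj).choose_spec
  have hmaps : ∀ j ∈ Finset.range n, F j ∈ s \ {π₀, π₁} := by
    intro j hj
    obtain ⟨hm, hn0, hn1⟩ := hBs _ _ (hBF j (Finset.mem_range.1 hj))
    simp [Finset.mem_sdiff, hm, hn0, hn1]
  have hinj : Set.InjOn F (Finset.range n) := by
    intro j hj j' hj' he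
    refine hBu (F j) j j' (hBF j (Finset.mem_range.1 hj)) ?_
    rw [he]; exact hBF j' (Finset.mem_range.1 hj')
  have hle := Finset.card_le_card_of_injOn F hmaps hinj
  have h2 : ({π₀, π₁} : Finset ℕ).card = 2 := by
    rw [Finset.card_insert_of_notMem (by simp [hne]), Finset.card_singleton]
  have hn2 : 2 ≤ n := by
    have := Finset.card_le_card hsub
    omega
  rw [Finset.card_range, Finset.card_sdiff_of_subset hsub, hs, h2] at hle
  omega

lemma main_range {n : ℕ} (hn : 1 ≤ n) (Θ : ℕ → Option ↥(Tpoint n)) (hΘ : HasDomCard Θ n) :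
    Set.range (flat Θ) = Set.range (flat (mapAssign (fEquiv n) Θ)) := by
  classical
  obtain ⟨s, hdom, hcard⟩ := hΘ
  apply range_eq_aux _ _ (n + 1)
  · -- the two flattenings agree away from position n+1
    intro i hi
    funext p
    simp only [flat, mapAssign]
    cases hp : Θ p.2 with
    | none => rfl
    | some τ =>
      simp only [hp, Option.map_some, Option.getD_some, fEquiv_apply]
      exact (congrFun (fMap_off τ hi) p.1).symm
  · -- flat Θ (n+1) appears at position n of the mapped assignment
    refine ⟨n, ?_⟩
    funext p
    simp only [flat, mapAssign]
    cases hp : Θ p.2 with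
    | none => rfl
    | some τ =>
      simp only [hp, Option.map_some, Option.getD_some, fEquiv_apply]
      exact congrFun (fMap_at_n τ) p.1
  · -- flat (f ∘ Θ) (n+1) appears somewhere in flat Θ
    by_cases hbig : ∃ π τ, Θ π = some τ ∧ τ.1 = blockTr (vXY true true) 0 (n + 2)
    · by_cases hsp : ∃ π τ, Θ π = some τ ∧
        (τ.1 = blockTr (vXY true false) n 2 ∨ τ.1 = blockTr (vXY false true) n 2)
      · -- both a big trace and a two-block trace occur: find a free position j < n
        obtain ⟨π₁, τ₁, hπ₁, hτ₁⟩ := hbig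
        obtain ⟨π₀, τ₀, hπ₀, hτ₀⟩ := hsp
        have hπ₀s : π₀ ∈ s := (hdom π₀).1 (by rw [hπ₀]; rfl)
        have hπ₁s : π₁ ∈ s := (hdom π₁).1 (by rw [hπ₁]; rfl)
        have hπne : π₀ ≠ π₁ := by
          rintro rfl
          rw [hπ₀] at hπ₁
          have hτ : τ₀ = τ₁ := by injection hπ₁
          have e1 : τ₀.1 = blockTr (vXY true true) 0 (n + 2) :=
            (congrArg Subtype.val hτ).trans hτ₁
          rcases hτ₀ with h | h
          · exact En_ne_block one_le_two big_mem_En (Or.inl rfl) (e1.symm.trans h)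
          · exact En_ne_block one_le_two big_mem_En (Or.inr rfl) (e1.symm.trans h)
        have hfree : ∃ j, j < n ∧ ∀ π (τ : ↥(Tpoint n)), Θ π = some τ →
            τ.1 ≠ blockTr (vXY true false) j 1 ∧ τ.1 ≠ blockTr (vXY false true) j 1 := by
          by_contra hc
          push_neg at hc
          refine counting hcard hπ₀s hπ₁s hπne
            (fun π j => j < n ∧ ∃ τ : ↥(Tpoint n), Θ π = some τ ∧
              (τ.1 = blockTr (vXY true false) j 1 ∨ τ.1 = blockTr (vXY false true) j 1))
            ?_ ?_ ?_
          · rintro π j ⟨hj, τ, hπ, hor⟩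
            have hEn : τ.1 ∈ En n := Or.inr ⟨j, hj, hor⟩
            refine ⟨(hdom π).1 (by rw [hπ]; rfl), ?_, ?_⟩
            · rintro rfl
              rw [hπ₀] at hπ
              have hτ : τ₀ = τ := by injection hπ
              rcases hτ₀ with h | h
              · exact En_ne_block one_le_two hEn (Or.inl rfl)
                  ((congrArg Subtype.val hτ).symm.trans h)
              · exact En_ne_block one_le_two hEn (Or.inr rfl)
                  ((congrArg Subtype.val hτ).symm.trans h)
            · rintro rfl
              rw [hπ₁] at hπ
              have hτ : τ₁ = τ := by injection hπ
              rcases hor with h | h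
              · exact single_ne_big hj _
                  (h.symm.trans ((congrArg Subtype.val hτ).symm.trans hτ₁))
              · exact single_ne_big hj _
                  (h.symm.trans ((congrArg Subtype.val hτ).symm.trans hτ₁))
          · rintro π j j' ⟨hj, τ, hπ, hor⟩ ⟨hj', τ', hπ', hor'⟩
            have hττ : τ = τ' := by rw [hπ] at hπ'; injection hπ'
            subst hττ
            rcases hor with h | h <;> rcases hor' with h' | h'
            · exact blockTr_single_inj v10_ne_ff (h.symm.trans h')
            · exact blockTr_single_inj v10_ne_ff (h.symm.trans h')
            · exact blockTr_single_inj v01_ne_ff (h.symm.trans h')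
            · exact blockTr_single_inj v01_ne_ff (h.symm.trans h')
          · intro j hj
            obtain ⟨π, τ, hπ, hor⟩ := hc j hj
            refine ⟨π, hj, τ, hπ, ?_⟩
            by_cases hA : τ.1 = blockTr (vXY true false) j 1
            · exact Or.inl hA
            · exact Or.inr (hor hA)
        obtain ⟨j, hj, hfr⟩ := hfree
        refine ⟨j, ?_⟩
        funext p
        simp only [flat, mapAssign]
        cases hp : Θ p.2 with
        | none => rfl
        | some τ =>
          simp only [hp, Option.map_some, Option.getD_some, fEquiv_apply]
          obtain ⟨hf1, hf2⟩ := hfr p.2 τ hp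
          exact congrFun (free_eval τ hj hf1 hf2) p.1
      · -- no two-block trace occurs: the flattenings agree at n+1 as well
        push_neg at hsp
        refine ⟨n + 1, ?_⟩
        funext p
        simp only [flat, mapAssign]
        cases hp : Θ p.2 with
        | none => rfl
        | some τ =>
          simp only [hp, Option.map_some, Option.getD_some, fEquiv_apply]
          have hE : τ.1 ∈ En n := by
            rcases Tpoint_cases τ.2 with hE | h | h
            · exact hE
            · exact absurd h (hsp p.2 τ hp).1
            · exact absurd h (hsp p.2 τ hp).2
          rw [fMap_eq_self τ hE]
    · -- no big trace occurs: both are all-false; compare with position n+2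
      push_neg at hbig
      refine ⟨n + 2, ?_⟩
      funext p
      simp only [flat, mapAssign]
      cases hp : Θ p.2 with
      | none => rfl
      | some τ =>
        simp only [hp, Option.map_some, Option.getD_some, fEquiv_apply]
        rw [congrFun (Tpoint_at_n2 τ) p.1,
          congrFun (fMap_at_n1_nonbig τ (hbig p.2 τ hp)) p.1]

end Aux

/-- For every `n ≥ 1`, the sets `T^point_n` and `T'^point_n` are
`(n, 𝔾)`-equivalent, where the witnessing trace equivalence `≈_𝔾` relates two traces
iff they have the same set of occurring valuations (equal ranges). -/
theorem Tpoint_nG_equiv_Tpoint' (n : ℕ) (hn : 1 ≤ n) :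
    ∃ f : ↥(Tpoint n) ≃ ↥(Tpoint' n),
      (∀ Θ : ℕ → Option ↥(Tpoint n), HasDomCard Θ n →
        Set.range (flat Θ) = Set.range (flat (mapAssign f Θ))) ∧
      (∀ Θ' : ℕ → Option ↥(Tpoint' n), HasDomCard Θ' n →
        Set.range (flat Θ') = Set.range (flat (mapAssign f.symm Θ'))) := by
  refine ⟨fEquiv n, fun Θ hΘ => main_range hn Θ hΘ, fun Θ' hΘ' => ?_⟩
  have h1 : HasDomCard (mapAssign (fEquiv n).symm Θ') n := by
    obtain ⟨s, hdom, hcard⟩ := hΘ'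
    exact ⟨s, fun π => by simpa [mapAssign] using hdom π, hcard⟩
  have key := main_range hn (mapAssign (fEquiv n).symm Θ') h1
  have he : mapAssign (fEquiv n) (mapAssign (fEquiv n).symm Θ') = Θ' := by
    funext π
    simp [mapAssign, Option.map_map]
  rw [he] at key
  exact key.symm
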